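/- Let w and w' be two closed walks of the form a₁⋯a_m | b₁⋯b_m and a'₁⋯a'_m | b'₁⋯b'_m in ℤ^d from the origin to the origin, and suppose φ(w) = φ(w') as perfect matchings and the positive steps agree: a_i = a'_i for all i. Then b_j = b'_j for all j, so w = w'. -/

import Mathlib

/-- `a_i`: the maximum size of a planar matching of the perfect matching given by
the permutation `σ` that uses only pairs `(i', σ i')` with `i' ≤ i` and contains
the pair `(i, σ i)`; a planar matching is a set of indices on which `σ` is
strictly increasing. -/
def aVal (m : ℕ) (σ : Equiv.Perm (Fin m)) (i : Fin m) : ℕ :=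
  (Finset.univ.filter (fun s : Finset (Fin m) =>
    i ∈ s ∧ (∀ x ∈ s, x ≤ i) ∧ ∀ x ∈ s, ∀ y ∈ s, x < y → σ x < σ y)).sup
    Finset.card

/-- `b_j`: the maximum size of a planar matching of `σ` using only pairs with
right endpoint at most `j` and containing the pair `(σ⁻¹ j, j)`. -/
def bVal (m : ℕ) (σ : Equiv.Perm (Fin m)) (j : Fin m) : ℕ :=
  aVal m σ⁻¹ j

/-- The quasi-configuration `φ(w)` of a representative walk
`w = a₁⋯a_m | b₁⋯b_m`: for each level `k`, the initial segment of
`A_k = {i : a i = k}` of size `min |A_k| |B_k|` is matched in the crossing way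
with the terminal segment of `B_k = {j : b j = k}` of the same size. A left
index `i` is paired with a right index `j` iff they are on the same level, the
rank of `i` from the start of `A_k` equals the rank of `j` from the end of
`B_k`, and this common rank is less than `min |A_k| |B_k|`. -/
def phiMatch (m : ℕ) (a b : Fin m → ℕ) : Set (Fin m × Fin m) :=
  {p : Fin m × Fin m |
    a p.1 = b p.2 ∧
    (Finset.univ.filter (fun i' : Fin m => a i' = a p.1 ∧ i' < p.1)).card =
      (Finset.univ.filter (fun j' : Fin m => b j' = b p.2 ∧ p.2 < j')).card ∧
    (Finset.univ.filter (fun i' : Fin m => a i' = a p.1 ∧ i' < p.1)).card <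
      min (Finset.univ.filter (fun i' : Fin m => a i' = a p.1)).card
        (Finset.univ.filter (fun j' : Fin m => b j' = b p.2)).card}

lemma exists_rank {n : ℕ} (s : Finset (Fin n)) (r : ℕ) (hr : r < s.card) :
    ∃ i ∈ s, (s.filter (fun x => x < i)).card = r := by
  set f := s.orderIsoOfFin rfl with hf
  refine ⟨f ⟨r, hr⟩, (f ⟨r, hr⟩).2, ?_⟩
  refine Eq.trans ?_ (by simp : (Finset.Iio (⟨r, hr⟩ : Fin s.card)).card = r)
  apply Finset.card_bij (fun x hx => f.symm ⟨x, (Finset.mem_filter.mp hx).1⟩)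
  · intro x hx
    simp only [Finset.mem_filter] at hx
    simp only [Finset.mem_Iio]
    have := hx.2
    rw [← f.lt_iff_lt]
    simp only [OrderIso.apply_symm_apply]; exact this
  · intro x hx y hy h
    have : (⟨x, (Finset.mem_filter.mp hx).1⟩ : {z // z ∈ s}) = ⟨y, (Finset.mem_filter.mp hy).1⟩ :=
      f.symm.injective h
    simpa using this
  · intro t ht
    refine ⟨f t, Finset.mem_filter.mpr ⟨(f t).2, ?_⟩, by simp⟩
    have : t < (⟨r, hr⟩ : Fin s.card) := Finset.mem_Iio.mp ht
    exact f.lt_iff_lt.mpr this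

/-- If two closed walks `w = a₁⋯a_m | b₁⋯b_m` and `w' = a'₁⋯a'_m | b'₁⋯b'_m`
from the origin to the origin have `φ(w) = φ(w')` as perfect matchings and
agree on their positive steps, then they also agree on their negative steps,
so `w = w'`. -/
theorem eq_of_phiMatch_eq_of_pos_eq (m d : ℕ) (a a' b b' : Fin m → ℕ)
    (ha : ∀ i, a i < d) (ha' : ∀ i, a' i < d)
    (hb : ∀ j, b j < d) (hb' : ∀ j, b' j < d)
    (hclosed : ∀ k : ℕ,
      (Finset.univ.filter (fun i : Fin m => a i = k)).card =
      (Finset.univ.filter (fun j : Fin m => b j = k)).card)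
    (hclosed' : ∀ k : ℕ,
      (Finset.univ.filter (fun i : Fin m => a' i = k)).card =
      (Finset.univ.filter (fun j : Fin m => b' j = k)).card)
    (hphi : phiMatch m a b = phiMatch m a' b') (hpos : a = a') :
    b = b' := by
  funext j
  set k := b j with hk
  set r := (Finset.univ.filter (fun j' : Fin m => b j' = k ∧ j < j')).card with hrr
  set s := Finset.univ.filter (fun i : Fin m => a i = k) with hs
  have hrlt : r < s.card := by
    rw [hs, hclosed k]
    apply Finset.card_lt_card
    constructor
    · intro x hx
      simp only [Finset.mem_filter] at hx ⊢
      exact ⟨hx.1, hx.2.1⟩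
    · intro hsub
      have := hsub (Finset.mem_filter.mpr ⟨Finset.mem_univ j, hk.symm⟩)
      simp only [Finset.mem_filter] at this
      exact lt_irrefl j this.2.2
  obtain ⟨i, his, hir⟩ := exists_rank s r hrlt
  have hik : a i = k := (Finset.mem_filter.mp his).2
  have hfilt : Finset.univ.filter (fun i' : Fin m => a i' = a i ∧ i' < i) =
      s.filter (fun x => x < i) := by
    ext i'
    simp only [hs, Finset.mem_filter, Finset.mem_univ, true_and, hik]
  have hmem : (i, j) ∈ phiMatch m a b := by
    show (i, j) ∈ ({p : Fin m × Fin m |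
    a p.1 = b p.2 ∧
    (Finset.univ.filter (fun i' : Fin m => a i' = a p.1 ∧ i' < p.1)).card =
      (Finset.univ.filter (fun j' : Fin m => b j' = b p.2 ∧ p.2 < j')).card ∧
    (Finset.univ.filter (fun i' : Fin m => a i' = a p.1 ∧ i' < p.1)).card <
      min (Finset.univ.filter (fun i' : Fin m => a i' = a p.1)).card
        (Finset.univ.filter (fun j' : Fin m => b j' = b p.2)).card} : Set (Fin m × Fin m))
    refine ⟨by simpa [hik] using hk.symm, ?_, ?_⟩
    · rw [hfilt, hir]
    · rw [hfilt, hir, hik, ← hk, ← hs]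
      have hbs : (Finset.univ.filter (fun j' : Fin m => b j' = k)).card = s.card := by
        rw [hs]; exact (hclosed k).symm
      rw [hbs, min_self]
      exact hrlt
  rw [hphi] at hmem
  have : a' i = b' j := hmem.1
  rw [← hpos] at this
  rw [hik] at this
  exact this
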